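/- arXiv:2509.24015 — 4 statements merged into one kernel-verified Lean document; each statement's English description precedes it below -/
import Mathlib

section
/- Let v ≥ 3 be odd and k ≥ 3, and let C = (0, c_2, …, c_k) be a k-cycle on ZMod v of type 1 whose list of differences ΔC = {±(c_{i+1}−c_i) : indices mod k} consists of 2k pairwise distinct elements of ZMod v. Then the k-cycle −C := (0, −c_2, …, −c_k) is not a translate of C, i.e., there is no t ∈ ZMod v with −C + t = C as cycles. -/
namespace CCS

/-- A block: a set of edges of the complete graph on `ZMod v`. -/
abbrev Block (v : ℕ) := Finset (Sym2 (ZMod v))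

/-- The edge set of the closed tuple `c = (c 0, c 1, …, c (k-1))`. -/
def edgesOf {v k : ℕ} (c : Fin k → ZMod v) : Block v :=
  Finset.image (fun i : Fin k => s(c i, c ⟨(i.1 + 1) % k, Nat.mod_lt _ i.pos⟩)) Finset.univ

/-- `E` is the edge set of a `k`-cycle on `ZMod v`. Since for `k ≥ 3` the edge set
determines the closed tuple up to rotation and reversal, a `k`-cycle is identified
with its edge set. -/
def IsCycleBlock (v k : ℕ) (E : Block v) : Prop :=
  ∃ c : Fin k → ZMod v, Function.Injective c ∧ E = edgesOf c

/-- The translate `E + z` of a cycle. -/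
def translateBlock {v : ℕ} (E : Block v) (z : ZMod v) : Block v :=
  E.image (Sym2.map (· + z))

/-- A `(K_v, C_k)`-design: a set of `k`-cycles whose edge sets partition the edges of `K_v`. -/
def IsDesign (v k : ℕ) (B : Set (Block v)) : Prop :=
  (∀ E ∈ B, IsCycleBlock v k E) ∧
  ∀ e : Sym2 (ZMod v), ¬ e.IsDiag → ∃! E, E ∈ B ∧ e ∈ E

/-- A cyclic `(K_v, C_k)`-design. -/
def IsCyclicDesign (v k : ℕ) (B : Set (Block v)) : Prop :=
  IsDesign v k B ∧ ∀ E ∈ B, ∀ z : ZMod v, translateBlock E z ∈ B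

/-- Two designs are isomorphic if a bijection of `ZMod v` maps one onto the other. -/
def Isomorphic {v : ℕ} (B B' : Set (Block v)) : Prop :=
  ∃ f : ZMod v ≃ ZMod v, B' = (fun E : Block v => E.image (Sym2.map f)) '' B

/-- `NC v k`: the number of cyclic `(K_v, C_k)`-designs up to isomorphism. -/
noncomputable def NC (v k : ℕ) : ℕ :=
  Nat.card (Quot fun B B' : {B : Set (Block v) // IsCyclicDesign v k B} =>
    Isomorphic B.1 B'.1)

/-- The type of a cycle: the order of its stabilizer under translations. -/
noncomputable def cycleType {v : ℕ} (E : Block v) : ℕ :=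
  Nat.card {z : ZMod v // translateBlock E z = E}

/-- The two differences `±(a-b)` arising from an edge `{a,b}`. -/
def edgeDiffs {v : ℕ} : Sym2 (ZMod v) → Multiset (ZMod v) :=
  Sym2.lift ⟨fun a b => {a - b, b - a}, fun a b => by
    show (a-b) ::ₘ {b-a} = (b-a) ::ₘ {a-b}; exact Multiset.cons_swap _ _ _⟩

/-- The multiset of the `2k` differences arising from the `k` edges of a cycle.
For a cycle of type `d` this is `d` copies of the list `∂C` of partial differences. -/
def fullDiffs {v : ℕ} (E : Block v) : Multiset (ZMod v) :=
  E.val.bind edgeDiffs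

/-- The multiset `∂C` of partial differences of a cycle: each difference is counted
with multiplicity equal to its multiplicity among the `2k` edge differences divided
by the type of the cycle. -/
noncomputable def partialDiffs {v : ℕ} (E : Block v) : Multiset (ZMod v) :=
  (fullDiffs E).toFinset.val.bind fun x =>
    Multiset.replicate ((fullDiffs E).count x / cycleType E) x

/-- A `(K_v, C_k)`-difference system: a set of `k`-cycles whose partial differences
cover every nonzero element of `ZMod v` exactly once. -/
def IsDifferenceSystem (v k : ℕ) (F : Finset (Block v)) : Prop :=
  (∀ E ∈ F, IsCycleBlock v k E) ∧
  ∀ x : ZMod v, (F.val.bind partialDiffs).count x = if x = 0 then 0 else 1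

end CCS

/-- Let `C = (0, c_2, …, c_k)` be a `k`-cycle of type 1 whose list of
differences `ΔC` consists of `2k` pairwise distinct elements. Then the cycle
`-C = (0, -c_2, …, -c_k)` is not a translate of `C`. -/
theorem stmt2 (v k : ℕ) (hv : 3 ≤ v) (hvodd : Odd v) (hk : 3 ≤ k)
    (c : Fin k → ZMod v) (hc0 : c ⟨0, by omega⟩ = 0)
    (hcinj : Function.Injective c)
    (htype : CCS.cycleType (CCS.edgesOf c) = 1)
    (hdiff : (CCS.fullDiffs (CCS.edgesOf c)).Nodup) :
    ∀ t : ZMod v, CCS.translateBlock (CCS.edgesOf fun i => -(c i)) t ≠ CCS.edgesOf c := by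
  intro t h
  haveI : NeZero v := ⟨by omega⟩
  have h2 : IsUnit (2 : ZMod v) := by
    have : IsUnit ((2 : ℕ) : ZMod v) := by
      rw [ZMod.isUnit_iff_coprime, Nat.coprime_two_left]; exact hvodd
    simpa using this
  -- next index
  have key : ∀ i : Fin k, t = c i + c ⟨(i.1 + 1) % k, Nat.mod_lt _ i.pos⟩ := by
    intro i
    set j : Fin k := ⟨(i.1 + 1) % k, Nat.mod_lt _ i.pos⟩ with hjdef
    have hij : i ≠ j := by
      intro hij
      apply_fun (Fin.val) at hij
      rcases Nat.lt_or_ge (i.1 + 1) k with hlt | hge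
      · rw [hjdef] at hij; simp [Nat.mod_eq_of_lt hlt] at hij
      · have hik : i.1 + 1 = k := le_antisymm i.2 hge
        rw [hjdef] at hij
        simp [hik] at hij
        omega
    have hab : c i ≠ c j := fun hcc => hij (hcinj hcc)
    set a := c i with ha
    set b := c j with hb
    -- the negated translated edge is in edgesOf c
    have hmem : s(-a + t, -b + t) ∈ CCS.edgesOf c := by
      rw [← h, CCS.translateBlock]
      apply Finset.mem_image.mpr
      refine ⟨s(-a, -b), ?_, by simp [Sym2.map_pair_eq]⟩
      exact Finset.mem_image.mpr ⟨i, Finset.mem_univ _, rfl⟩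
    obtain ⟨m, -, hm⟩ := Finset.mem_image.mp hmem
    set em := s(c m, c ⟨(m.1 + 1) % k, Nat.mod_lt _ m.pos⟩) with hem
    have hemE : em ∈ CCS.edgesOf c := Finset.mem_image.mpr ⟨m, Finset.mem_univ _, rfl⟩
    have heiE : s(a, b) ∈ CCS.edgesOf c := Finset.mem_image.mpr ⟨i, Finset.mem_univ _, rfl⟩
    -- b - a lies in edgeDiffs of both em and s(a,b)
    have hx1 : (b - a) ∈ CCS.edgeDiffs em := by
      rw [hm]
      show (b - a) ∈ CCS.edgeDiffs s(-a + t, -b + t)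
      have : CCS.edgeDiffs s(-a + t, -b + t) = {(-a + t) - (-b + t), (-b + t) - (-a + t)} := rfl
      rw [this]
      have : (-a + t) - (-b + t) = b - a := by ring
      rw [this]
      exact Multiset.mem_cons_self _ _
    have hx2 : (b - a) ∈ CCS.edgeDiffs s(a, b) := by
      have : CCS.edgeDiffs s(a, b) = {a - b, b - a} := rfl
      rw [this]
      exact Multiset.mem_cons_of_mem (Multiset.mem_singleton_self _)
    -- em = s(a, b) using nodup of fullDiffs
    have hemeq : em = s(a, b) := by
      by_contra hne
      have hcount : 2 ≤ Multiset.count (b - a) (CCS.fullDiffs (CCS.edgesOf c)) := by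
        rw [CCS.fullDiffs, Multiset.count_bind]
        have hsum : (Multiset.map (fun e => Multiset.count (b - a) (CCS.edgeDiffs e))
            (CCS.edgesOf c).val).sum
            = ∑ e ∈ CCS.edgesOf c, Multiset.count (b - a) (CCS.edgeDiffs e) := rfl
        rw [hsum]
        have hsub : ({em, s(a, b)} : Finset (Sym2 (ZMod v))) ⊆ CCS.edgesOf c := by
          intro x hx
          rcases Finset.mem_insert.mp hx with hx | hx
          · rwa [hx]
          · rw [Finset.mem_singleton.mp hx]; exact heiE
        calc (2 : ℕ) = 1 + 1 := rfl
          _ ≤ Multiset.count (b - a) (CCS.edgeDiffs em)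
              + Multiset.count (b - a) (CCS.edgeDiffs s(a, b)) :=
            Nat.add_le_add (Multiset.one_le_count_iff_mem.mpr hx1)
              (Multiset.one_le_count_iff_mem.mpr hx2)
          _ = ∑ e ∈ ({em, s(a, b)} : Finset (Sym2 (ZMod v))),
              Multiset.count (b - a) (CCS.edgeDiffs e) :=
            (Finset.sum_pair (f := fun e => Multiset.count (b - a) (CCS.edgeDiffs e)) hne).symm
          _ ≤ ∑ e ∈ CCS.edgesOf c, Multiset.count (b - a) (CCS.edgeDiffs e) :=
            Finset.sum_le_sum_of_subset hsub
      have := Multiset.nodup_iff_count_le_one.mp hdiff (b - a)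
      omega
    have hfix : s(-a + t, -b + t) = s(a, b) := by rw [← hm, hemeq]
    rw [Sym2.eq_iff] at hfix
    rcases hfix with ⟨h1, h2'⟩ | ⟨h1, h2'⟩
    · exfalso
      apply hab
      have e1 : 2 * a = t := by rw [two_mul]; linear_combination -h1
      have e2 : 2 * b = t := by rw [two_mul]; linear_combination -h2'
      exact h2.mul_left_cancel (by rw [e1, e2])
    · linear_combination h1
  -- apply key at i = 0 and i = 1
  have k0 : (⟨(0 + 1) % k, Nat.mod_lt _ (Fin.pos ⟨0, by omega⟩)⟩ : Fin k) = ⟨1, by omega⟩ := by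
    ext; simp [Nat.mod_eq_of_lt (show 0 + 1 < k by omega)]
  have k1 : (⟨(1 + 1) % k, Nat.mod_lt _ (Fin.pos ⟨1, by omega⟩)⟩ : Fin k) = ⟨2, by omega⟩ := by
    ext; simp [Nat.mod_eq_of_lt (show 1 + 1 < k by omega)]
  have e0 := key ⟨0, by omega⟩
  have e1 := key ⟨1, by omega⟩
  rw [k0] at e0
  rw [k1] at e1
  have : c ⟨0, by omega⟩ = c ⟨2, by omega⟩ := by linear_combination e1 - e0
  have h02 := hcinj this
  simp [Fin.mk.injEq] at h02
end

section
/- Let n ≥ 2 and let (s_1, …, s_n) be a split Skolem (Rosa) sequence of order n. In ZMod (6n+3), the set F = {C_1, …, C_n} ∪ {B}, where C_i = (0, i, s_i + i + n) for 1 ≤ i ≤ n and B = (0, 2n+1, 4n+2), is a (K_{6n+3}, C_3)-difference system: the multiset {±i, ±(s_i+n), ±(s_i+i+n) : 1 ≤ i ≤ n} ∪ {±(2n+1)} covers every nonzero element of ZMod (6n+3) exactly once. Moreover each C_i is of type 1 and B is of type 3. -/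
/-- A split Skolem (Rosa) sequence of order `n`: positive integers `s_1, …, s_n` with
`⋃_{i=1}^n {s_i, s_i + i} = {1, …, 2n+2} \ {n+1, m}`, where `m = 2n+2` if
`n ≡ 0, 3 (mod 4)` and `m = 2n+1` (split-hooked) if `n ≡ 1, 2 (mod 4)`. -/
def IsSplitSkolem (n : ℕ) (s : ℕ → ℕ) : Prop :=
  (∀ i ∈ Finset.Icc 1 n, 1 ≤ s i) ∧
  (Finset.Icc 1 n).biUnion (fun i => {s i, s i + i}) =
    (Finset.Icc 1 (2 * n + 2)) \
      {n + 1, if n % 4 = 0 ∨ n % 4 = 3 then 2 * n + 2 else 2 * n + 1}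

/-- The `3`-cycle `C_i = (0, i, s_i + i + n)` on `ZMod (6n+3)`. -/
noncomputable def rosaCycle (n : ℕ) (s : ℕ → ℕ) (i : ℕ) : CCS.Block (6 * n + 3) :=
  CCS.edgesOf ![(0 : ZMod (6 * n + 3)), (i : ZMod (6 * n + 3)),
    ((s i + i + n : ℕ) : ZMod (6 * n + 3))]

/-- The `3`-cycle `B = (0, 2n+1, 4n+2)` on `ZMod (6n+3)`. -/
noncomputable def rosaShortCycle (n : ℕ) : CCS.Block (6 * n + 3) :=
  CCS.edgesOf ![(0 : ZMod (6 * n + 3)), ((2 * n + 1 : ℕ) : ZMod (6 * n + 3)),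
    ((4 * n + 2 : ℕ) : ZMod (6 * n + 3))]

namespace RosaAux
open Multiset Finset

instance instNZ (n : ℕ) : NeZero (6*n+3) := ⟨by omega⟩

variable {v : ℕ}

lemma edgesOf_three (a b c : ZMod v) :
    CCS.edgesOf ![a,b,c] = {s(a,b), s(b,c), s(c,a)} := by
  ext e
  simp only [CCS.edgesOf, Finset.mem_image, Finset.mem_univ, true_and, Finset.mem_insert,
    Finset.mem_singleton]
  constructor
  · rintro ⟨i, rfl⟩
    fin_cases i <;> simp
  · rintro (rfl | rfl | rfl)
    exacts [⟨0, by simp⟩, ⟨1, by simp⟩, ⟨2, by simp⟩]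

lemma triple_val {a b c : ZMod v} (hab : a ≠ b) (hbc : b ≠ c) (hca : c ≠ a) :
    ({s(a,b), s(b,c), s(c,a)} : CCS.Block v).val = {s(a,b), s(b,c), s(c,a)} := by
  rw [show ({s(a,b), s(b,c), s(c,a)} : CCS.Block v)
      = insert s(a,b) (insert s(b,c) {s(c,a)}) from rfl,
    Finset.insert_val_of_notMem, Finset.insert_val_of_notMem] <;>
    simp [Sym2.eq_iff] <;> tauto

lemma fullDiffs_triple {a b c : ZMod v} (hab : a ≠ b) (hbc : b ≠ c) (hca : c ≠ a) :
    CCS.fullDiffs ({s(a,b), s(b,c), s(c,a)} : CCS.Block v) =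
      {a-b, b-a, b-c, c-b, c-a, a-c} := by
  rw [CCS.fullDiffs, triple_val hab hbc hca]
  show ((s(a,b) ::ₘ s(b,c) ::ₘ {s(c,a)}).bind CCS.edgeDiffs) = _
  rw [Multiset.cons_bind, Multiset.cons_bind, Multiset.singleton_bind]
  rfl

lemma edge_mem_of_translate_eq {E : CCS.Block v} {z : ZMod v} (h : CCS.translateBlock E z = E)
    {e : Sym2 (ZMod v)} (he : e ∈ E) : Sym2.map (· + z) e ∈ E := by
  rw [← h]; exact Finset.mem_image_of_mem _ he

lemma translate_triple {a b c : ZMod v} (z : ZMod v) :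
    CCS.translateBlock ({s(a,b), s(b,c), s(c,a)} : CCS.Block v) z
      = {s(a+z,b+z), s(b+z,c+z), s(c+z,a+z)} := by
  simp [CCS.translateBlock, Finset.image_insert, Sym2.map_pair_eq]

lemma translateBlock_zero (E : CCS.Block v) : CCS.translateBlock E 0 = E := by
  have : (Sym2.map fun x : ZMod v => x + 0) = id := by
    ext e; induction e; simp [Sym2.map_pair_eq]
  simp [CCS.translateBlock, this]

lemma cycleType_eq_one {E : CCS.Block v} (h : ∀ z, CCS.translateBlock E z = E → z = 0) :
    CCS.cycleType E = 1 := by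
  have hiff : ∀ z : ZMod v, CCS.translateBlock E z = E ↔ z = 0 :=
    fun z => ⟨h z, by rintro rfl; exact translateBlock_zero E⟩
  unfold CCS.cycleType
  simp_rw [hiff]
  haveI : Unique {z : ZMod v // z = 0} := ⟨⟨⟨0, rfl⟩⟩, by rintro ⟨z, rfl⟩; rfl⟩
  exact Nat.card_unique

lemma cycleType_eq_three {E : CCS.Block v} {t : ZMod v} (ht : t ≠ 0) (h2t : t + t ≠ 0)
    (h : ∀ z, CCS.translateBlock E z = E ↔ (z = 0 ∨ z = t ∨ z = t + t)) :
    CCS.cycleType E = 3 := by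
  unfold CCS.cycleType
  simp_rw [h]
  have hmem : ∀ z : ZMod v, (z = 0 ∨ z = t ∨ z = t + t) ↔ z ∈ ({0, t, t+t} : Finset (ZMod v)) := by
    simp
  simp_rw [hmem]
  rw [Nat.card_eq_finsetCard]
  rw [Finset.card_insert_of_notMem (by simp [Ne.symm ht, Ne.symm h2t]),
    Finset.card_insert_of_notMem (by simpa using ht), Finset.card_singleton]

lemma bind_replicate_count {α : Type*} [DecidableEq α] (m : Multiset α) :
    (m.toFinset.val.bind fun x => Multiset.replicate (m.count x) x) = m := by
  ext y
  rw [Multiset.count_bind]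
  rw [show (Multiset.map (fun b => Multiset.count y (Multiset.replicate (m.count b) b))
      m.toFinset.val).sum
      = ∑ x ∈ m.toFinset, Multiset.count y (Multiset.replicate (m.count x) x) from
    (Finset.sum_eq_multiset_sum _ _).symm]
  simp only [Multiset.count_replicate]
  rw [Finset.sum_ite_eq']
  by_cases hy : y ∈ m.toFinset
  · simp [hy]
  · simp [hy, Multiset.count_eq_zero_of_notMem (by simpa using hy)]

lemma partialDiffs_of_type_one {E : CCS.Block v} (h1 : CCS.cycleType E = 1) :
    CCS.partialDiffs E = CCS.fullDiffs E := by
  unfold CCS.partialDiffs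
  rw [h1]
  simp only [Nat.div_one]
  exact bind_replicate_count _

lemma partialDiffs_of_type_three {E : CCS.Block v} {t u : ZMod v} (h3 : CCS.cycleType E = 3)
    (htu : t ≠ u) (hfd : CCS.fullDiffs E = {u,t,u,t,u,t}) :
    CCS.partialDiffs E = {u, t} := by
  unfold CCS.partialDiffs
  rw [h3, hfd]
  have htf : ({u,t,u,t,u,t} : Multiset (ZMod v)).toFinset = {u, t} := by
    ext x; simp [or_comm, or_assoc, or_left_comm]
  rw [htf, Finset.insert_val_of_notMem (by simpa using htu.symm)]
  have hcu : ({u,t,u,t,u,t} : Multiset (ZMod v)).count u = 3 := by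
    simp [Multiset.count_cons, htu, htu.symm]
  have hct : ({u,t,u,t,u,t} : Multiset (ZMod v)).count t = 3 := by
    simp [Multiset.count_cons, htu, htu.symm]
  rw [Multiset.cons_bind, Finset.singleton_val, Multiset.singleton_bind, hcu, hct]
  rfl

lemma count_finset_val {α : Type*} [DecidableEq α] (S : Finset α) (y : α) :
    Multiset.count y S.val = if y ∈ S then 1 else 0 := by
  split
  · exact Multiset.count_eq_one_of_mem S.nodup (by assumption)
  · exact Multiset.count_eq_zero.2 (by assumption)

lemma count_map_add (s : Multiset ℕ) (d y : ℕ) :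
    Multiset.count y (s.map (· + d)) = if d ≤ y then Multiset.count (y - d) s else 0 := by
  induction s using Multiset.induction_on with
  | empty => simp
  | cons a s ih =>
    rw [Multiset.map_cons, Multiset.count_cons, ih, Multiset.count_cons]
    by_cases hd : d ≤ y
    · rw [if_pos hd, if_pos hd]
      simp only [show (y = a + d) ↔ (y - d = a) from by omega]
    · rw [if_neg hd, if_neg hd, if_neg (by omega)]

end RosaAux
namespace RosaAux

lemma cast_inj' {n a b : ℕ} (ha : a < 6*n+3) (hb : b < 6*n+3)
    (h : (a : ZMod (6*n+3)) = b) : a = b := by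
  have := congrArg ZMod.val h
  rwa [ZMod.val_natCast_of_lt ha, ZMod.val_natCast_of_lt hb] at this

lemma cast_ne_zero' {n a : ℕ} (h0 : 0 < a) (h : a < 6*n+3) : (a : ZMod (6*n+3)) ≠ 0 := by
  intro hc
  have : a = 0 := cast_inj' h (by omega) (by simpa using hc)
  omega

lemma neg_cast' {n a : ℕ} (h : a ≤ 6*n+3) :
    -((a : ℕ) : ZMod (6*n+3)) = ((6*n+3 - a : ℕ) : ZMod (6*n+3)) := by
  rw [Nat.cast_sub h]
  simp

-- basic distinctness of the three vertices of C_i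
lemma rosa_vertices (n : ℕ) (s : ℕ → ℕ) (i : ℕ) (h1 : 1 ≤ i) (h2 : i ≤ n)
    (h3 : 1 ≤ s i) (h4 : s i + i ≤ 2*n+2) :
    (0 : ZMod (6*n+3)) ≠ (i : ZMod (6*n+3)) ∧
    (i : ZMod (6*n+3)) ≠ ((s i + i + n : ℕ) : ZMod (6*n+3)) ∧
    ((s i + i + n : ℕ) : ZMod (6*n+3)) ≠ (0 : ZMod (6*n+3)) := by
  refine ⟨fun h => ?_, fun h => ?_, fun h => ?_⟩
  · have := cast_inj' (by omega : (0:ℕ) < 6*n+3) (by omega : i < 6*n+3) (by exact_mod_cast h)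
    omega
  · have := cast_inj' (by omega : i < 6*n+3) (by omega : s i + i + n < 6*n+3) h
    omega
  · have := cast_inj' (by omega : s i + i + n < 6*n+3) (by omega : (0:ℕ) < 6*n+3)
      (by exact_mod_cast h)
    omega

lemma rosaCycle_eq (n : ℕ) (s : ℕ → ℕ) (i : ℕ) :
    rosaCycle n s i = {s((0 : ZMod (6*n+3)), (i : ZMod (6*n+3))),
      s((i : ZMod (6*n+3)), ((s i + i + n : ℕ) : ZMod (6*n+3))),
      s(((s i + i + n : ℕ) : ZMod (6*n+3)), (0 : ZMod (6*n+3)))} := by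
  have : ((i : ℕ) : ZMod (6*n+3)) = (i : ZMod (6*n+3)) := rfl
  exact edgesOf_three _ _ _

lemma rosaCycle_type (n : ℕ) (s : ℕ → ℕ) (i : ℕ) (h1 : 1 ≤ i) (h2 : i ≤ n)
    (h3 : 1 ≤ s i) (h4 : s i + i ≤ 2*n+2) :
    CCS.cycleType (rosaCycle n s i) = 1 := by
  apply cycleType_eq_one
  intro z hz
  rw [rosaCycle_eq] at hz
  have he : s((0 : ZMod (6*n+3)), (i : ZMod (6*n+3))) ∈
      ({s((0 : ZMod (6*n+3)), (i : ZMod (6*n+3))),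
        s((i : ZMod (6*n+3)), ((s i + i + n : ℕ) : ZMod (6*n+3))),
        s(((s i + i + n : ℕ) : ZMod (6*n+3)), (0 : ZMod (6*n+3)))} : CCS.Block (6*n+3)) := by
    simp
  have hm := edge_mem_of_translate_eq hz he
  rw [Sym2.map_pair_eq] at hm
  simp only [Finset.mem_insert, Finset.mem_singleton, Sym2.eq_iff, zero_add] at hm
  rcases hm with (⟨rfl, -⟩ | ⟨rfl, hA⟩) | (⟨rfl, hA⟩ | ⟨rfl, hA⟩) | (⟨rfl, hA⟩ | ⟨rfl, -⟩)
  · rfl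
  · -- z = i, i + i = 0
    exfalso
    rw [← Nat.cast_add] at hA
    exact cast_ne_zero' (by omega) (by omega) hA
  · -- z = i, i + i = s i + i + n
    exfalso
    rw [← Nat.cast_add] at hA
    have := cast_inj' (by omega) (by omega) hA
    omega
  · -- z = s i + i + n, i + z = i  →  z = 0, contradiction with z ≠ 0
    exfalso
    have hz0 : ((s i + i + n : ℕ) : ZMod (6*n+3)) = 0 := add_eq_left.mp hA
    exact cast_ne_zero' (by omega) (by omega) hz0
  · -- z = s i + i + n, i + z = 0
    exfalso
    rw [← Nat.cast_add] at hA
    exact cast_ne_zero' (by omega) (by omega) hA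
  · rfl

end RosaAux
namespace RosaAux

lemma rosaCycle_fullDiffs (n : ℕ) (s : ℕ → ℕ) (i : ℕ) (h1 : 1 ≤ i) (h2 : i ≤ n)
    (h3 : 1 ≤ s i) (h4 : s i + i ≤ 2*n+2) :
    CCS.fullDiffs (rosaCycle n s i) =
      {(i : ZMod (6*n+3)), -(i : ZMod (6*n+3)),
       ((s i + n : ℕ) : ZMod (6*n+3)), -((s i + n : ℕ) : ZMod (6*n+3)),
       ((s i + i + n : ℕ) : ZMod (6*n+3)), -((s i + i + n : ℕ) : ZMod (6*n+3))} := by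
  obtain ⟨hv1, hv2, hv3⟩ := rosa_vertices n s i h1 h2 h3 h4
  rw [rosaCycle_eq, fullDiffs_triple hv1 hv2 hv3]
  have hD : ((s i + i + n : ℕ) : ZMod (6*n+3)) - (i : ZMod (6*n+3))
      = ((s i + n : ℕ) : ZMod (6*n+3)) := by
    push_cast
    ring
  have hD' : (i : ZMod (6*n+3)) - ((s i + i + n : ℕ) : ZMod (6*n+3))
      = -((s i + n : ℕ) : ZMod (6*n+3)) := by
    push_cast
    ring
  rw [zero_sub, sub_zero, sub_zero, zero_sub, hD, hD']
  rw [show ({-(i : ZMod (6*n+3)), (i : ZMod (6*n+3)), -((s i + n : ℕ) : ZMod (6*n+3)),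
      ((s i + n : ℕ) : ZMod (6*n+3)), ((s i + i + n : ℕ) : ZMod (6*n+3)),
      -((s i + i + n : ℕ) : ZMod (6*n+3))} : Multiset (ZMod (6*n+3)))
    = -(i : ZMod (6*n+3)) ::ₘ (i : ZMod (6*n+3)) ::ₘ -((s i + n : ℕ) : ZMod (6*n+3)) ::ₘ
      ((s i + n : ℕ) : ZMod (6*n+3)) ::ₘ {((s i + i + n : ℕ) : ZMod (6*n+3)),
      -((s i + i + n : ℕ) : ZMod (6*n+3))} from rfl]
  rw [Multiset.cons_swap, Multiset.cons_swap (-((s i + n : ℕ) : ZMod (6*n+3)))]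
  rfl

lemma rosaCycle_partialDiffs (n : ℕ) (s : ℕ → ℕ) (i : ℕ) (h1 : 1 ≤ i) (h2 : i ≤ n)
    (h3 : 1 ≤ s i) (h4 : s i + i ≤ 2*n+2) :
    CCS.partialDiffs (rosaCycle n s i) =
      {(i : ZMod (6*n+3)), -(i : ZMod (6*n+3)),
       ((s i + n : ℕ) : ZMod (6*n+3)), -((s i + n : ℕ) : ZMod (6*n+3)),
       ((s i + i + n : ℕ) : ZMod (6*n+3)), -((s i + i + n : ℕ) : ZMod (6*n+3))} := by
  rw [partialDiffs_of_type_one (rosaCycle_type n s i h1 h2 h3 h4),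
    rosaCycle_fullDiffs n s i h1 h2 h3 h4]

section Short
variable (n : ℕ)

lemma short_t3 : ((2*n+1 : ℕ) : ZMod (6*n+3)) + ((2*n+1 : ℕ) : ZMod (6*n+3))
    + ((2*n+1 : ℕ) : ZMod (6*n+3)) = 0 := by
  rw [← Nat.cast_add, ← Nat.cast_add, show 2*n+1 + (2*n+1) + (2*n+1) = 6*n+3 from by ring,
    ZMod.natCast_self]

lemma short_u : ((4*n+2 : ℕ) : ZMod (6*n+3)) = -((2*n+1 : ℕ) : ZMod (6*n+3)) := by
  have hu : ((4*n+2 : ℕ) : ZMod (6*n+3))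
      = ((2*n+1 : ℕ) : ZMod (6*n+3)) + ((2*n+1 : ℕ) : ZMod (6*n+3)) := by
    rw [← Nat.cast_add]; congr 1; ring
  rw [hu]
  linear_combination short_t3 n

lemma rosaShort_eq : rosaShortCycle n =
    {s((0 : ZMod (6*n+3)), ((2*n+1 : ℕ) : ZMod (6*n+3))),
     s(((2*n+1 : ℕ) : ZMod (6*n+3)), ((4*n+2 : ℕ) : ZMod (6*n+3))),
     s(((4*n+2 : ℕ) : ZMod (6*n+3)), (0 : ZMod (6*n+3)))} := by
  have h := edgesOf_three (0 : ZMod (6*n+3)) ((2*n+1 : ℕ) : ZMod (6*n+3))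
    ((4*n+2 : ℕ) : ZMod (6*n+3))
  rw [rosaShortCycle, show (2 * n + 1 : ℕ) = 2*n+1 from rfl, show (4 * n + 2 : ℕ) = 4*n+2 from rfl,
    show (6 * n + 3 : ℕ) = 6*n+3 from rfl]
  exact h

lemma short_vertices :
    (0 : ZMod (6*n+3)) ≠ ((2*n+1 : ℕ) : ZMod (6*n+3)) ∧
    ((2*n+1 : ℕ) : ZMod (6*n+3)) ≠ ((4*n+2 : ℕ) : ZMod (6*n+3)) ∧
    ((4*n+2 : ℕ) : ZMod (6*n+3)) ≠ (0 : ZMod (6*n+3)) := by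
  refine ⟨fun h => ?_, fun h => ?_, fun h => ?_⟩
  · have := cast_inj' (by omega : (0:ℕ) < 6*n+3) (by omega : 2*n+1 < 6*n+3) (by exact_mod_cast h)
    omega
  · have := cast_inj' (by omega : 2*n+1 < 6*n+3) (by omega : 4*n+2 < 6*n+3) h
    omega
  · exact cast_ne_zero' (by omega) (by omega) h

lemma rosaShort_fullDiffs :
    CCS.fullDiffs (rosaShortCycle n) =
      {-((2*n+1 : ℕ) : ZMod (6*n+3)), ((2*n+1 : ℕ) : ZMod (6*n+3)),
       -((2*n+1 : ℕ) : ZMod (6*n+3)), ((2*n+1 : ℕ) : ZMod (6*n+3)),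
       -((2*n+1 : ℕ) : ZMod (6*n+3)), ((2*n+1 : ℕ) : ZMod (6*n+3))} := by
  obtain ⟨hv1, hv2, hv3⟩ := short_vertices n
  rw [rosaShort_eq, fullDiffs_triple hv1 hv2 hv3]
  rw [zero_sub, sub_zero, sub_zero, zero_sub, short_u,
    show ((2*n+1 : ℕ) : ZMod (6*n+3)) - -((2*n+1 : ℕ) : ZMod (6*n+3))
      = -((2*n+1 : ℕ) : ZMod (6*n+3)) from by linear_combination short_t3 n,
    show -((2*n+1 : ℕ) : ZMod (6*n+3)) - ((2*n+1 : ℕ) : ZMod (6*n+3))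
      = ((2*n+1 : ℕ) : ZMod (6*n+3)) from by linear_combination -short_t3 n,
    neg_neg]

lemma short_t_ne : ((2*n+1 : ℕ) : ZMod (6*n+3)) ≠ -((2*n+1 : ℕ) : ZMod (6*n+3)) := by
  intro h
  rw [neg_cast' (by omega)] at h
  have := cast_inj' (by omega : 2*n+1 < 6*n+3) (by omega : 6*n+3 - (2*n+1) < 6*n+3) h
  omega

lemma rosaShort_type : CCS.cycleType (rosaShortCycle n) = 3 := by
  have htt : ((4*n+2 : ℕ) : ZMod (6*n+3)) = ((2*n+1 : ℕ) : ZMod (6*n+3)) + ((2*n+1 : ℕ) : ZMod (6*n+3)) := by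
    rw [← Nat.cast_add]; congr 1; ring
  have ht0 : ((2*n+1 : ℕ) : ZMod (6*n+3)) ≠ 0 := cast_ne_zero' (by omega) (by omega)
  have h2t0 : ((2*n+1 : ℕ) : ZMod (6*n+3)) + ((2*n+1 : ℕ) : ZMod (6*n+3)) ≠ 0 := by
    rw [← htt]; exact cast_ne_zero' (by omega) (by omega)
  have h3t := short_t3 n
  apply cycleType_eq_three ht0 h2t0
  intro z
  rw [rosaShort_eq, htt]
  constructor
  · intro hz
    have he : s((0 : ZMod (6*n+3)), ((2*n+1 : ℕ) : ZMod (6*n+3))) ∈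
        ({s((0 : ZMod (6*n+3)), ((2*n+1 : ℕ) : ZMod (6*n+3))),
          s(((2*n+1 : ℕ) : ZMod (6*n+3)), ((2*n+1 : ℕ) : ZMod (6*n+3)) + ((2*n+1 : ℕ) : ZMod (6*n+3))),
          s(((2*n+1 : ℕ) : ZMod (6*n+3)) + ((2*n+1 : ℕ) : ZMod (6*n+3)), (0 : ZMod (6*n+3)))} :
          CCS.Block (6*n+3)) := by simp
    have hm := edge_mem_of_translate_eq hz he
    rw [Sym2.map_pair_eq] at hm
    simp only [Finset.mem_insert, Finset.mem_singleton, Sym2.eq_iff, zero_add] at hm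
    rcases hm with (⟨rfl, -⟩ | ⟨rfl, hA⟩) | (⟨rfl, -⟩ | ⟨rfl, hA⟩) | (⟨rfl, -⟩ | ⟨rfl, -⟩)
    · exact Or.inl rfl
    · exact absurd hA h2t0
    · exact Or.inr (Or.inl rfl)
    · exfalso; exact h2t0 (by rwa [add_eq_left] at hA)
    · exact Or.inr (Or.inr rfl)
    · exact Or.inl rfl
  · rintro (rfl | rfl | rfl)
    · exact translateBlock_zero _
    · rw [translate_triple, zero_add, show ((2*n+1 : ℕ) : ZMod (6*n+3)) + ((2*n+1 : ℕ) : ZMod (6*n+3)) + ((2*n+1 : ℕ) : ZMod (6*n+3)) = 0 from h3t]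
      ext e
      simp only [Finset.mem_insert, Finset.mem_singleton]
      tauto
    · rw [translate_triple, zero_add,
        show ((2*n+1 : ℕ) : ZMod (6*n+3)) + (((2*n+1 : ℕ) : ZMod (6*n+3)) + ((2*n+1 : ℕ) : ZMod (6*n+3))) = 0 from by linear_combination h3t,
        show ((2*n+1 : ℕ) : ZMod (6*n+3)) + ((2*n+1 : ℕ) : ZMod (6*n+3)) + (((2*n+1 : ℕ) : ZMod (6*n+3)) + ((2*n+1 : ℕ) : ZMod (6*n+3))) = ((2*n+1 : ℕ) : ZMod (6*n+3)) from by linear_combination h3t]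
      ext e
      simp only [Finset.mem_insert, Finset.mem_singleton]
      tauto

lemma rosaShort_partialDiffs :
    CCS.partialDiffs (rosaShortCycle n) =
      {((2*n+1 : ℕ) : ZMod (6*n+3)), -((2*n+1 : ℕ) : ZMod (6*n+3))} := by
  rw [partialDiffs_of_type_three (rosaShort_type n) (short_t_ne n) (rosaShort_fullDiffs n)]
  exact Multiset.cons_swap _ _ _

end Short
end RosaAux
namespace RosaAux

lemma key_count (n : ℕ) (hn : 2 ≤ n) (s : ℕ → ℕ) (hs : IsSplitSkolem n s) :
    ∀ x : ZMod (6 * n + 3),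
      Multiset.count x
        (((Finset.Icc 1 n).val.bind fun i =>
            ({(i : ZMod (6 * n + 3)), -(i : ZMod (6 * n + 3)),
              ((s i + n : ℕ) : ZMod (6 * n + 3)), -((s i + n : ℕ) : ZMod (6 * n + 3)),
              ((s i + i + n : ℕ) : ZMod (6 * n + 3)),
              -((s i + i + n : ℕ) : ZMod (6 * n + 3))} : Multiset (ZMod (6 * n + 3)))) +
          {((2 * n + 1 : ℕ) : ZMod (6 * n + 3)), -((2 * n + 1 : ℕ) : ZMod (6 * n + 3))}) =
        if x = 0 then 0 else 1 := by
  intro x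
  obtain ⟨hpos, hset⟩ := hs
  set mm := (if n % 4 = 0 ∨ n % 4 = 3 then 2 * n + 2 else 2 * n + 1) with hmmdef
  have hmb : 2*n+1 ≤ mm ∧ mm ≤ 2*n+2 := by
    rw [hmmdef]; split <;> omega
  -- the Skolem multiset
  set N : Multiset ℕ := ((Finset.Icc 1 n).val.bind fun i => ({s i, s i + i} : Multiset ℕ))
    with hNdef
  have hT : N.toFinset = (Finset.Icc 1 n).biUnion (fun i => ({s i, s i + i} : Finset ℕ)) := by
    ext y
    simp only [hNdef, Multiset.mem_toFinset, Multiset.mem_bind, Finset.mem_biUnion,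
      Finset.mem_Icc, Multiset.insert_eq_cons, Multiset.mem_cons, Multiset.mem_singleton,
      Finset.mem_insert, Finset.mem_singleton, Finset.mem_val]
  have hcardN : Multiset.card N = 2*n := by
    rw [hNdef, Multiset.card_bind]
    rw [show (Multiset.map (Multiset.card ∘ fun i => ({s i, s i + i} : Multiset ℕ))
        (Finset.Icc 1 n).val) = Multiset.map (fun _ => 2) (Finset.Icc 1 n).val from
      Multiset.map_congr rfl (fun _ _ => rfl)]
    rw [Multiset.map_const', Multiset.sum_replicate]
    have : Multiset.card (Finset.Icc 1 n).val = n := by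
      rw [show Multiset.card (Finset.Icc 1 n).val = (Finset.Icc 1 n).card from rfl, Nat.card_Icc]
      omega
    rw [this, smul_eq_mul]
    omega
  have hsub : ({n+1, mm} : Finset ℕ) ⊆ Finset.Icc 1 (2*n+2) := by
    intro y hy
    simp only [Finset.mem_insert, Finset.mem_singleton] at hy
    simp only [Finset.mem_Icc]
    rcases hy with rfl | rfl <;> omega
  have hcardR : (Finset.Icc 1 (2*n+2) \ {n+1, mm}).card = 2*n := by
    rw [Finset.card_sdiff_of_subset hsub, Nat.card_Icc,
      Finset.card_insert_of_notMem (by simp; omega), Finset.card_singleton]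
    omega
  have hnd : N.Nodup := by
    apply Multiset.toFinset_card_eq_card_iff_nodup.1
    rw [hT, hset, hcardR, hcardN]
  have hN : N = (Finset.Icc 1 (2*n+2) \ {n+1, mm}).val := by
    refine (Multiset.Nodup.ext hnd (Finset.nodup _)).2 (fun y => ?_)
    rw [← Multiset.mem_toFinset, hT, hset]
    exact Iff.rfl
  -- the full multiset of base differences, in ℕ
  set P : Multiset ℕ :=
    ((Finset.Icc 1 n).val.bind fun i => ({i, s i + n, s i + i + n} : Multiset ℕ)) + {2*n+1}
    with hPdef
  have hP : P = (Finset.Icc 1 (3*n+2) \ {mm+n}).val := by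
    have hsplit : P = (Finset.Icc 1 n).val + Multiset.map (· + n) N + {2*n+1} := by
      rw [hPdef]
      congr 1
      rw [show (fun i => ({i, s i + n, s i + i + n} : Multiset ℕ))
          = fun i => ({i} : Multiset ℕ) + ({s i + n, s i + i + n} : Multiset ℕ) from
        funext fun i => (Multiset.singleton_add _ _).symm]
      rw [Multiset.bind_add]
      congr 1
      · exact (Multiset.bind_singleton _ id).trans (Multiset.map_id _)
      · rw [hNdef, Multiset.map_bind]
        exact Multiset.bind_congr (fun i _ => by simp)
    ext y
    rw [hsplit, hN, Multiset.count_add, Multiset.count_add, count_map_add,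
      count_finset_val, count_finset_val, count_finset_val, Multiset.count_singleton]
    simp only [Finset.mem_sdiff, Finset.mem_Icc, Finset.mem_insert, Finset.mem_singleton]
    have h1 : ∀ i ∈ Finset.Icc 1 n, 1 ≤ s i ∧ s i + i ≤ 2*n+2 ∧ s i ≠ n+1 ∧ s i ≠ mm ∧
        s i + i ≠ n+1 ∧ s i + i ≠ mm := by
      intro i hi
      have h2 : s i ∈ Finset.Icc 1 (2*n+2) \ {n+1, mm} := by
        rw [← hset]; exact Finset.mem_biUnion.2 ⟨i, hi, by simp⟩
      have h3 : s i + i ∈ Finset.Icc 1 (2*n+2) \ {n+1, mm} := by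
        rw [← hset]; exact Finset.mem_biUnion.2 ⟨i, hi, by simp⟩
      simp only [Finset.mem_sdiff, Finset.mem_Icc, Finset.mem_insert,
        Finset.mem_singleton, not_or] at h2 h3
      exact ⟨h2.1.1, h3.1.2, h2.2.1, h2.2.2, h3.2.1, h3.2.2⟩
    split_ifs <;> omega
  -- relate the ZMod multiset to P
  have hbindg : (P.bind fun y : ℕ =>
        ({((y : ℕ) : ZMod (6 * n + 3)), -((y : ℕ) : ZMod (6 * n + 3))} :
          Multiset (ZMod (6 * n + 3))))
      = ((Finset.Icc 1 n).val.bind fun i =>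
          ({(i : ZMod (6 * n + 3)), -(i : ZMod (6 * n + 3)),
            ((s i + n : ℕ) : ZMod (6 * n + 3)), -((s i + n : ℕ) : ZMod (6 * n + 3)),
            ((s i + i + n : ℕ) : ZMod (6 * n + 3)),
            -((s i + i + n : ℕ) : ZMod (6 * n + 3))} : Multiset (ZMod (6 * n + 3)))) +
        {((2 * n + 1 : ℕ) : ZMod (6 * n + 3)), -((2 * n + 1 : ℕ) : ZMod (6 * n + 3))} := by
    rw [hPdef, Multiset.add_bind, Multiset.bind_assoc]
    have h2 : ({2*n+1} : Multiset ℕ).bind (fun y : ℕ =>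
        ({((y : ℕ) : ZMod (6 * n + 3)), -((y : ℕ) : ZMod (6 * n + 3))} :
          Multiset (ZMod (6 * n + 3))))
        = {((2 * n + 1 : ℕ) : ZMod (6 * n + 3)), -((2 * n + 1 : ℕ) : ZMod (6 * n + 3))} := by
      rw [Multiset.singleton_bind]
    rw [h2]
    congr 1
  rw [← hbindg, hP, Multiset.count_bind, ← Finset.sum_eq_multiset_sum]
  by_cases hx : x = 0
  · subst hx
    rw [if_pos rfl]
    apply Finset.sum_eq_zero
    intro y hy
    simp only [Finset.mem_sdiff, Finset.mem_Icc, Finset.mem_singleton] at hy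
    have hy1 : ((y : ℕ) : ZMod (6 * n + 3)) ≠ 0 := cast_ne_zero' (by omega) (by omega)
    rw [Multiset.count_eq_zero]
    simp only [Multiset.insert_eq_cons, Multiset.mem_cons, Multiset.mem_singleton]
    push_neg
    exact ⟨fun h => hy1 h.symm, fun h => hy1 (neg_eq_zero.mp h.symm)⟩
  · rw [if_neg hx]
    have hxv1 : 1 ≤ x.val := by
      have : x.val ≠ 0 := fun h => hx ((ZMod.val_eq_zero x).1 h)
      omega
    have hxv2 : x.val < 6 * n + 3 := ZMod.val_lt x
    have hxcast : ((x.val : ℕ) : ZMod (6 * n + 3)) = x := ZMod.natCast_rightInverse x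
    have hcong : ∀ y ∈ Finset.Icc 1 (3*n+2) \ {mm+n},
        Multiset.count x
          (({((y : ℕ) : ZMod (6 * n + 3)), -((y : ℕ) : ZMod (6 * n + 3))} :
            Multiset (ZMod (6 * n + 3))))
          = (if y = 6*n+3 - x.val then 1 else 0) + (if y = x.val then 1 else 0) := by
      intro y hy
      simp only [Finset.mem_sdiff, Finset.mem_Icc, Finset.mem_singleton] at hy
      have hylt : y < 6 * n + 3 := by omega
      have e1 : (x = ((y : ℕ) : ZMod (6 * n + 3))) ↔ (y = x.val) := by
        constructor
        · intro h; rw [h, ZMod.val_natCast_of_lt hylt]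
        · intro h; rw [h, hxcast]
      have e2 : (x = -((y : ℕ) : ZMod (6 * n + 3))) ↔ (y = 6*n+3 - x.val) := by
        rw [neg_cast' (by omega)]
        constructor
        · intro h
          have := congrArg ZMod.val h
          rw [ZMod.val_natCast_of_lt (by omega)] at this
          omega
        · intro h
          rw [h, show 6*n+3 - (6*n+3 - x.val) = x.val from by omega, hxcast]
      rw [Multiset.insert_eq_cons, Multiset.count_cons, Multiset.count_singleton,
        if_congr e2 rfl rfl, if_congr e1 rfl rfl]
    rw [Finset.sum_congr rfl hcong, Finset.sum_add_distrib, Finset.sum_ite_eq',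
      Finset.sum_ite_eq']
    simp only [Finset.mem_sdiff, Finset.mem_Icc, Finset.mem_singleton]
    split_ifs <;> omega

end RosaAux
namespace RosaAux

lemma inj3 {v : ℕ} {a b c : ZMod v} (hab : a ≠ b) (hbc : b ≠ c) (hca : c ≠ a) :
    Function.Injective ![a, b, c] := by
  intro x y hxy
  fin_cases x <;> fin_cases y <;> simp_all

lemma rosaCycle_inj (n : ℕ) (s : ℕ → ℕ)
    (hb : ∀ i ∈ Finset.Icc 1 n, 1 ≤ i ∧ i ≤ n ∧ 1 ≤ s i ∧ s i + i ≤ 2*n+2) :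
    ∀ i ∈ Finset.Icc 1 n, ∀ j ∈ Finset.Icc 1 n, rosaCycle n s i = rosaCycle n s j → i = j := by
  intro i hi j hj h
  obtain ⟨hi1, hi2, hi3, hi4⟩ := hb i hi
  obtain ⟨hj1, hj2, hj3, hj4⟩ := hb j hj
  have hmem : (i : ZMod (6*n+3)) ∈ CCS.fullDiffs (rosaCycle n s j) := by
    rw [← h, rosaCycle_fullDiffs n s i hi1 hi2 hi3 hi4]
    simp
  rw [rosaCycle_fullDiffs n s j hj1 hj2 hj3 hj4] at hmem
  simp only [Multiset.insert_eq_cons, Multiset.mem_cons, Multiset.mem_singleton] at hmem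
  rcases hmem with h1 | h1 | h1 | h1 | h1 | h1
  · exact cast_inj' (by omega) (by omega) h1
  · rw [neg_cast' (by omega)] at h1
    have := cast_inj' (by omega) (by omega) h1; omega
  · have := cast_inj' (by omega) (by omega) h1; omega
  · rw [neg_cast' (by omega)] at h1
    have := cast_inj' (by omega) (by omega) h1; omega
  · have := cast_inj' (by omega) (by omega) h1; omega
  · rw [neg_cast' (by omega)] at h1
    have := cast_inj' (by omega) (by omega) h1; omega

end RosaAux

/-- For a split Skolem sequence `(s_1, …, s_n)` of order `n ≥ 2`, the set
`F = {C_1, …, C_n} ∪ {B}` with `C_i = (0, i, s_i + i + n)` and `B = (0, 2n+1, 4n+2)` is a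
`(K_{6n+3}, C_3)`-difference system: the multiset
`{±i, ±(s_i+n), ±(s_i+i+n) : 1 ≤ i ≤ n} ∪ {±(2n+1)}` covers every nonzero element of
`ZMod (6n+3)` exactly once. Moreover each `C_i` is of type 1 and `B` is of type 3. -/
theorem stmt3 (n : ℕ) (hn : 2 ≤ n) (s : ℕ → ℕ) (hs : IsSplitSkolem n s) :
    CCS.IsDifferenceSystem (6 * n + 3) 3
      ((Finset.Icc 1 n).image (rosaCycle n s) ∪ {rosaShortCycle n}) ∧
    (∀ x : ZMod (6 * n + 3),
      Multiset.count x
        (((Finset.Icc 1 n).val.bind fun i =>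
            ({(i : ZMod (6 * n + 3)), -(i : ZMod (6 * n + 3)),
              ((s i + n : ℕ) : ZMod (6 * n + 3)), -((s i + n : ℕ) : ZMod (6 * n + 3)),
              ((s i + i + n : ℕ) : ZMod (6 * n + 3)),
              -((s i + i + n : ℕ) : ZMod (6 * n + 3))} : Multiset (ZMod (6 * n + 3)))) +
          {((2 * n + 1 : ℕ) : ZMod (6 * n + 3)), -((2 * n + 1 : ℕ) : ZMod (6 * n + 3))}) =
        if x = 0 then 0 else 1) ∧
    (∀ i ∈ Finset.Icc 1 n, CCS.cycleType (rosaCycle n s i) = 1) ∧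
    CCS.cycleType (rosaShortCycle n) = 3 := by
  classical
  have hb : ∀ i ∈ Finset.Icc 1 n, 1 ≤ i ∧ i ≤ n ∧ 1 ≤ s i ∧ s i + i ≤ 2*n+2 := by
    intro i hi
    have h2 : s i + i ∈ Finset.Icc 1 (2 * n + 2) \
        {n + 1, if n % 4 = 0 ∨ n % 4 = 3 then 2 * n + 2 else 2 * n + 1} := by
      rw [← hs.2]; exact Finset.mem_biUnion.2 ⟨i, hi, by simp⟩
    simp only [Finset.mem_Icc] at hi
    simp only [Finset.mem_sdiff, Finset.mem_Icc] at h2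
    exact ⟨hi.1, hi.2, hs.1 i (by simp only [Finset.mem_Icc]; omega), h2.1.2⟩
  have htype1 : ∀ i ∈ Finset.Icc 1 n, CCS.cycleType (rosaCycle n s i) = 1 := by
    intro i hi
    obtain ⟨h1, h2, h3, h4⟩ := hb i hi
    exact RosaAux.rosaCycle_type n s i h1 h2 h3 h4
  have htype3 := RosaAux.rosaShort_type n
  have hFval : ((Finset.Icc 1 n).image (rosaCycle n s) ∪ {rosaShortCycle n}).val
      = Multiset.map (rosaCycle n s) (Finset.Icc 1 n).val + {rosaShortCycle n} := by
    refine (Multiset.Nodup.ext (Finset.nodup _) ?_).2 (fun E => ?_)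
    · rw [Multiset.nodup_add]
      refine ⟨Multiset.Nodup.map_on ?_ (Finset.Icc 1 n).nodup, Multiset.nodup_singleton _, ?_⟩
      · intro i hi j hj hij
        exact RosaAux.rosaCycle_inj n s hb i hi j hj hij
      · rw [Multiset.disjoint_left]
        intro a ha hb'
        rw [Multiset.mem_singleton] at hb'
        obtain ⟨i, hi, rfl⟩ := Multiset.mem_map.1 ha
        have h1 := htype1 i hi
        rw [hb', htype3] at h1
        omega
    · simp only [Finset.mem_val, Finset.mem_union, Finset.mem_image, Finset.mem_singleton,
        Multiset.mem_add, Multiset.mem_map, Multiset.mem_singleton, Finset.mem_val]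
  have hbind : (((Finset.Icc 1 n).image (rosaCycle n s) ∪ {rosaShortCycle n}).val).bind
        CCS.partialDiffs
      = ((Finset.Icc 1 n).val.bind fun i =>
          ({(i : ZMod (6 * n + 3)), -(i : ZMod (6 * n + 3)),
            ((s i + n : ℕ) : ZMod (6 * n + 3)), -((s i + n : ℕ) : ZMod (6 * n + 3)),
            ((s i + i + n : ℕ) : ZMod (6 * n + 3)),
            -((s i + i + n : ℕ) : ZMod (6 * n + 3))} : Multiset (ZMod (6 * n + 3)))) +
        {((2 * n + 1 : ℕ) : ZMod (6 * n + 3)), -((2 * n + 1 : ℕ) : ZMod (6 * n + 3))} := by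
    rw [hFval, Multiset.add_bind, Multiset.singleton_bind, Multiset.bind_map,
      RosaAux.rosaShort_partialDiffs]
    congr 1
    refine Multiset.bind_congr (fun i hi => ?_)
    obtain ⟨h1, h2, h3, h4⟩ := hb i hi
    exact RosaAux.rosaCycle_partialDiffs n s i h1 h2 h3 h4
  refine ⟨⟨?_, ?_⟩, RosaAux.key_count n hn s hs, htype1, htype3⟩
  · intro E hE
    rw [Finset.mem_union] at hE
    rcases hE with hE | hE
    · obtain ⟨i, hi, rfl⟩ := Finset.mem_image.1 hE
      obtain ⟨h1, h2, h3, h4⟩ := hb i hi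
      obtain ⟨hv1, hv2, hv3⟩ := RosaAux.rosa_vertices n s i h1 h2 h3 h4
      exact ⟨_, RosaAux.inj3 hv1 hv2 hv3, rfl⟩
    · rw [Finset.mem_singleton] at hE
      subst hE
      obtain ⟨hv1, hv2, hv3⟩ := RosaAux.short_vertices n
      exact ⟨_, RosaAux.inj3 hv1 hv2 hv3, rfl⟩
  · intro x
    rw [hbind]
    exact RosaAux.key_count n hn s hs x
end

section
/- Let v ≥ 3 be odd and let C = (0, a_1, a_2, a_3, a_4) be a 5-cycle of type 1 on ZMod v with consecutive differences d_i = a_i − a_{i−1} (a_0 = a_5 = 0), so that the 10 elements ±d_1, …, ±d_5 are pairwise distinct in ZMod v. Then for every permutation σ of {1,…,5}, the five partial sums 0, d_{σ(1)}, d_{σ(1)}+d_{σ(2)}, d_{σ(1)}+d_{σ(2)}+d_{σ(3)}, d_{σ(1)}+d_{σ(2)}+d_{σ(3)}+d_{σ(4)} are pairwise distinct, so that C_σ := (0, d_{σ(1)}, d_{σ(1)}+d_{σ(2)}, d_{σ(1)}+d_{σ(2)}+d_{σ(3)}, d_{σ(1)}+d_{σ(2)}+d_{σ(3)}+d_{σ(4)})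 is again a 5-cycle, it is of type 1, and ∂C_σ = ∂C. -/
/-- The partial sums `0, d_1, d_1+d_2, d_1+d_2+d_3, d_1+d_2+d_3+d_4` of a difference
sequence `d : Fin 5 → ZMod v`: the vertex tuple of the associated 5-cycle. -/
def psum {v : ℕ} (d : Fin 5 → ZMod v) (j : Fin 5) : ZMod v :=
  ∑ i ∈ Finset.univ.filter (fun i : Fin 5 => (i : ℕ) < (j : ℕ)), d i

namespace Stmt7Aux

variable {v : ℕ}

lemma psum_0 (e : Fin 5 → ZMod v) : psum e 0 = 0 := by
  simp [psum, Finset.sum_filter, Fin.sum_univ_five]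

lemma psum_1 (e : Fin 5 → ZMod v) : psum e 1 = e 0 := by
  simp [psum, Finset.sum_filter, Fin.sum_univ_five,
    show ((2:Fin 5):ℕ)=2 from rfl, show ((3:Fin 5):ℕ)=3 from rfl, show ((4:Fin 5):ℕ)=4 from rfl]

lemma psum_2 (e : Fin 5 → ZMod v) : psum e 2 = e 0 + e 1 := by
  simp [psum, Finset.sum_filter, Fin.sum_univ_five,
    show ((2:Fin 5):ℕ)=2 from rfl, show ((3:Fin 5):ℕ)=3 from rfl, show ((4:Fin 5):ℕ)=4 from rfl]

lemma psum_3 (e : Fin 5 → ZMod v) : psum e 3 = e 0 + e 1 + e 2 := by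
  simp [psum, Finset.sum_filter, Fin.sum_univ_five,
    show ((2:Fin 5):ℕ)=2 from rfl, show ((3:Fin 5):ℕ)=3 from rfl, show ((4:Fin 5):ℕ)=4 from rfl]

lemma psum_4 (e : Fin 5 → ZMod v) : psum e 4 = e 0 + e 1 + e 2 + e 3 := by
  simp [psum, Finset.sum_filter, Fin.sum_univ_five,
    show ((2:Fin 5):ℕ)=2 from rfl, show ((3:Fin 5):ℕ)=3 from rfl, show ((4:Fin 5):ℕ)=4 from rfl]

/-- The cyclic successor on `Fin 5`, in the exact form used in `CCS.edgesOf`. -/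
def fsucc (j : Fin 5) : Fin 5 := ⟨(j.1 + 1) % 5, Nat.mod_lt _ j.pos⟩

lemma psum_succ (e : Fin 5 → ZMod v) (hs : e 0 + e 1 + e 2 + e 3 + e 4 = 0) (j : Fin 5) :
    psum e (fsucc j) = psum e j + e j := by
  fin_cases j
  · show psum e 1 = psum e 0 + e 0
    rw [psum_0, psum_1]; ring
  · show psum e 2 = psum e 1 + e 1
    rw [psum_1, psum_2]
  · show psum e 3 = psum e 2 + e 2
    rw [psum_2, psum_3]
  · show psum e 4 = psum e 3 + e 3
    rw [psum_3, psum_4]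
  · show psum e 0 = psum e 4 + e 4
    rw [psum_0, psum_4]; linear_combination -hs

lemma psum_inj (e : Fin 5 → ZMod v) (nz2 : ∀ i j : Fin 5, e i + e j ≠ 0)
    (hs : e 0 + e 1 + e 2 + e 3 + e 4 = 0) : Function.Injective (psum e) := by
  have p0 := psum_0 e; have p1 := psum_1 e; have p2 := psum_2 e
  have p3 := psum_3 e; have p4 := psum_4 e
  intro a b h
  fin_cases a <;> fin_cases b <;>
    simp only [Fin.mk_zero, Fin.mk_one, show (⟨2,by omega⟩:Fin 5) = 2 from rfl,
      show (⟨3,by omega⟩:Fin 5) = 3 from rfl, show (⟨4,by omega⟩:Fin 5) = 4 from rfl,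
      p0, p1, p2, p3, p4] at h ⊢ <;>
  first
    | rfl
    | (exact absurd (show e 0 + e 0 = 0 by linear_combination 2*h) (nz2 0 0))
    | (exact absurd (show e 0 + e 0 = 0 by linear_combination -2*h) (nz2 0 0))
    | (exact absurd (show e 1 + e 1 = 0 by linear_combination 2*h) (nz2 1 1))
    | (exact absurd (show e 1 + e 1 = 0 by linear_combination -2*h) (nz2 1 1))
    | (exact absurd (show e 2 + e 2 = 0 by linear_combination 2*h) (nz2 2 2))
    | (exact absurd (show e 2 + e 2 = 0 by linear_combination -2*h) (nz2 2 2))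
    | (exact absurd (show e 3 + e 3 = 0 by linear_combination 2*h) (nz2 3 3))
    | (exact absurd (show e 3 + e 3 = 0 by linear_combination -2*h) (nz2 3 3))
    | (exact absurd (show e 4 + e 4 = 0 by linear_combination 2*h + 2*hs) (nz2 4 4))
    | (exact absurd (show e 4 + e 4 = 0 by linear_combination -2*h + 2*hs) (nz2 4 4))
    | (exact absurd (show e 0 + e 1 = 0 by linear_combination h) (nz2 0 1))
    | (exact absurd (show e 0 + e 1 = 0 by linear_combination -h) (nz2 0 1))
    | (exact absurd (show e 1 + e 2 = 0 by linear_combination h) (nz2 1 2))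
    | (exact absurd (show e 1 + e 2 = 0 by linear_combination -h) (nz2 1 2))
    | (exact absurd (show e 2 + e 3 = 0 by linear_combination h) (nz2 2 3))
    | (exact absurd (show e 2 + e 3 = 0 by linear_combination -h) (nz2 2 3))
    | (exact absurd (show e 3 + e 4 = 0 by linear_combination h + hs) (nz2 3 4))
    | (exact absurd (show e 3 + e 4 = 0 by linear_combination -h + hs) (nz2 3 4))
    | (exact absurd (show e 0 + e 4 = 0 by linear_combination h + hs) (nz2 0 4))
    | (exact absurd (show e 0 + e 4 = 0 by linear_combination -h + hs) (nz2 0 4))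

lemma edgefun_inj (e : Fin 5 → ZMod v) (hne : ∀ i j : Fin 5, e i ≠ -e j)
    (hinj : Function.Injective (psum e)) (hs : e 0 + e 1 + e 2 + e 3 + e 4 = 0) :
    Function.Injective (fun i : Fin 5 => s(psum e i, psum e (fsucc i))) := by
  intro i j h
  simp only [Sym2.eq_iff] at h
  rcases h with ⟨h1, _⟩ | ⟨h1, h2⟩
  · exact hinj h1
  · exfalso
    have s1 := psum_succ e hs i
    have s2 := psum_succ e hs j
    exact hne i j (by linear_combination -h1 + h2 - s1 - s2)

lemma full_eq (e : Fin 5 → ZMod v) (hne : ∀ i j : Fin 5, e i ≠ -e j)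
    (hinj : Function.Injective (psum e)) (hs : e 0 + e 1 + e 2 + e 3 + e 4 = 0) :
    CCS.fullDiffs (CCS.edgesOf (psum e)) =
      (Finset.univ.val : Multiset (Fin 5)).bind (fun i => {-(e i), e i}) := by
  have hf := edgefun_inj e hne hinj hs
  have hval : (CCS.edgesOf (psum e)).val =
      Multiset.map (fun i : Fin 5 => s(psum e i, psum e (fsucc i))) Finset.univ.val :=
    Finset.image_val_of_injOn hf.injOn
  rw [CCS.fullDiffs, hval, Multiset.bind_map]
  refine Multiset.bind_congr (fun i _ => ?_)
  rw [show CCS.edgeDiffs (s(psum e i, psum e (fsucc i)))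
        = {psum e i - psum e (fsucc i), psum e (fsucc i) - psum e i} from rfl,
    psum_succ e hs i,
    show psum e i - (psum e i + e i) = -e i by ring,
    show psum e i + e i - psum e i = e i by ring]

lemma stab (e : Fin 5 → ZMod v) (hne : ∀ i j : Fin 5, e i ≠ -e j)
    (heinj : Function.Injective e) (hs : e 0 + e 1 + e 2 + e 3 + e 4 = 0) (z : ZMod v)
    (hz : CCS.translateBlock (CCS.edgesOf (psum e)) z = CCS.edgesOf (psum e)) : z = 0 := by
  have hmem : s(psum e 0, psum e (fsucc 0)) ∈ CCS.edgesOf (psum e) := by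
    rw [CCS.edgesOf, Finset.mem_image]
    exact ⟨0, Finset.mem_univ 0, rfl⟩
  have hmem2 : s(psum e 0 + z, psum e (fsucc 0) + z) ∈ CCS.edgesOf (psum e) := by
    rw [← hz, CCS.translateBlock, ← Sym2.map_pair_eq (· + z)]
    exact Finset.mem_image_of_mem _ hmem
  rw [CCS.edgesOf, Finset.mem_image] at hmem2
  obtain ⟨i, -, hi⟩ := hmem2
  rw [Sym2.eq_iff] at hi
  have s0 := psum_succ e hs 0
  have si := psum_succ e hs i
  rcases hi with ⟨h1, h2⟩ | ⟨h1, h2⟩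
  · have h2' : psum e (fsucc i) = psum e (fsucc 0) + z := h2
    have hi0 : i = 0 := heinj (show e i = e 0 by linear_combination h2' - h1 - si + s0)
    subst hi0
    linear_combination -h1
  · have h2' : psum e (fsucc i) = psum e 0 + z := h2
    exact absurd (show e i = -e 0 by linear_combination h2' - h1 - si - s0) (hne i 0)

lemma translate_zero (E : CCS.Block v) : CCS.translateBlock E 0 = E := by
  rw [CCS.translateBlock]
  have : (Sym2.map (· + (0 : ZMod v))) = id := by
    funext x
    induction x using Sym2.ind with
    | _ a b => simp
  rw [this, Finset.image_id]

lemma type_one (e : Fin 5 → ZMod v) (hne : ∀ i j : Fin 5, e i ≠ -e j)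
    (heinj : Function.Injective e) (hs : e 0 + e 1 + e 2 + e 3 + e 4 = 0) :
    CCS.cycleType (CCS.edgesOf (psum e)) = 1 := by
  rw [CCS.cycleType, Nat.card_eq_one_iff_unique]
  refine ⟨⟨fun a b => Subtype.ext ?_⟩, ⟨⟨0, translate_zero _⟩⟩⟩
  rw [stab e hne heinj hs a.1 a.2, stab e hne heinj hs b.1 b.2]

end Stmt7Aux

/-- Let `C` be a 5-cycle of type 1 with consecutive differences
`d_1, …, d_5` (summing to `0`) such that the ten elements `±d_1, …, ±d_5` are pairwise
distinct. Then for every permutation `σ` of the indices, the five partial sums of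
`(d_{σ(1)}, …, d_{σ(5)})` are pairwise distinct, so they form a 5-cycle `C_σ`, which is
again of type 1 and satisfies `∂C_σ = ∂C`. -/
theorem stmt7 (v : ℕ) (hv : 3 ≤ v) (hvodd : Odd v) (d : Fin 5 → ZMod v)
    (hsum : ∑ i, d i = 0)
    (hCinj : Function.Injective (psum d))
    (htype : CCS.cycleType (CCS.edgesOf (psum d)) = 1)
    (hdiff : Function.Injective fun p : Fin 5 × Bool => cond p.2 (d p.1) (-d p.1)) :
    ∀ σ : Equiv.Perm (Fin 5),
      Function.Injective (psum (d ∘ σ)) ∧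
      CCS.IsCycleBlock v 5 (CCS.edgesOf (psum (d ∘ σ))) ∧
      CCS.cycleType (CCS.edgesOf (psum (d ∘ σ))) = 1 ∧
      CCS.partialDiffs (CCS.edgesOf (psum (d ∘ σ))) =
        CCS.partialDiffs (CCS.edgesOf (psum d)) := by
  intro σ
  have hne : ∀ i j : Fin 5, d i ≠ -d j := by
    intro i j h
    have h2 := hdiff (a₁ := (i, true)) (a₂ := (j, false)) (by simpa using h)
    simp at h2
  have dinj : Function.Injective d := by
    intro i j h
    have h2 := hdiff (a₁ := (i, true)) (a₂ := (j, true)) (by simpa using h)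
    simpa using h2
  have hsum5 : d 0 + d 1 + d 2 + d 3 + d 4 = 0 := by
    rw [Fin.sum_univ_five] at hsum; exact hsum
  set e : Fin 5 → ZMod v := d ∘ σ with he
  have heq : ∀ i, e i = d (σ i) := fun i => rfl
  have hsσ : e 0 + e 1 + e 2 + e 3 + e 4 = 0 := by
    have h1 : ∑ i, e i = 0 := by
      rw [he, show ∑ i, (d ∘ σ) i = ∑ i, d (σ i) from rfl, Equiv.sum_comp σ d, hsum]
    rwa [Fin.sum_univ_five] at h1
  have hneσ : ∀ i j : Fin 5, e i ≠ -e j := fun i j => hne (σ i) (σ j)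
  have heinjσ : Function.Injective e := dinj.comp σ.injective
  have nz2σ : ∀ i j : Fin 5, e i + e j ≠ 0 := fun i j h => hneσ i j (by linear_combination h)
  have hinjσ : Function.Injective (psum e) := Stmt7Aux.psum_inj e nz2σ hsσ
  have ht1 : CCS.cycleType (CCS.edgesOf (psum e)) = 1 :=
    Stmt7Aux.type_one e hneσ heinjσ hsσ
  refine ⟨hinjσ, ⟨psum e, hinjσ, rfl⟩, ht1, ?_⟩
  have hfσ := Stmt7Aux.full_eq e hneσ hinjσ hsσ
  have hf1 := Stmt7Aux.full_eq d hne hCinj hsum5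
  have hu : Multiset.map (⇑σ) (Finset.univ.val : Multiset (Fin 5)) = Finset.univ.val := by
    have h2 := congrArg Finset.val (Finset.map_univ_equiv σ)
    simpa [Finset.map_val] using h2
  have hfull : CCS.fullDiffs (CCS.edgesOf (psum e)) = CCS.fullDiffs (CCS.edgesOf (psum d)) := by
    rw [hfσ, hf1]
    calc (Finset.univ.val : Multiset (Fin 5)).bind (fun i => ({-(e i), e i} : Multiset (ZMod v)))
        = (Multiset.map (⇑σ) (Finset.univ.val : Multiset (Fin 5))).bind
            (fun i => ({-(d i), d i} : Multiset (ZMod v))) := by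
          rw [Multiset.bind_map]
          exact Multiset.bind_congr fun i _ => rfl
      _ = (Finset.univ.val : Multiset (Fin 5)).bind
            (fun i => ({-(d i), d i} : Multiset (ZMod v))) := by rw [hu]
  rw [CCS.partialDiffs, CCS.partialDiffs, hfull, ht1, htype]
end

section
/- Let v ≥ 3 be odd and let C be a 5-cycle of type 1 on ZMod v containing 0, with consecutive difference sequence (d_1, …, d_5) (summing to 0) such that the 10 elements ±d_1, …, ±d_5 are pairwise distinct in ZMod v. For permutations σ, τ of {1,…,5}, define C_σ = (0, d_{σ(1)}, d_{σ(1)}+d_{σ(2)}, …, d_{σ(1)}+⋯+d_{σ(4)}) and C_τ analogously. Then C_σ lies in the ZMod v-translation orbit of C_τ if and only if the oriented difference sequence (d_{σ(1)}, …, d_{σ(5)}) is a cyclic rotation of (d_{τ(1)}, …, d_{τ(5)}). Consequently, the 5! cycles C_α, α ranging over the permutations of {1,…,5}, fall into exactly 4! translation-orbit classes of 5 cycles each. -/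
/-- The translation orbit of a cycle under `ZMod v`. -/
def orbitOf {v : ℕ} (E : CCS.Block v) : Set (CCS.Block v) :=
  {E' | ∃ z : ZMod v, CCS.translateBlock E z = E'}

namespace Stmt8Aux

open Finset

variable {v : ℕ} {d : Fin 5 → ZMod v}

lemma fin5_next (i : Fin 5) : (⟨(i.1 + 1) % 5, Nat.mod_lt _ i.pos⟩ : Fin 5) = i + 1 := rfl

lemma edgesOf_eq (c : Fin 5 → ZMod v) :
    CCS.edgesOf c = Finset.image (fun i : Fin 5 => s(c i, c (i + 1))) Finset.univ := by
  unfold CCS.edgesOf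
  congr 1

lemma mem_edgesOf {c : Fin 5 → ZMod v} {e : Sym2 (ZMod v)} :
    e ∈ CCS.edgesOf c ↔ ∃ i : Fin 5, s(c i, c (i + 1)) = e := by
  rw [edgesOf_eq]
  simp

lemma translate_edgesOf (c : Fin 5 → ZMod v) (z : ZMod v) :
    CCS.translateBlock (CCS.edgesOf c) z = CCS.edgesOf (fun i => c i + z) := by
  rw [edgesOf_eq, edgesOf_eq, CCS.translateBlock, Finset.image_image]
  congr 1

lemma translate_translate (E : CCS.Block v) (z z' : ZMod v) :
    CCS.translateBlock (CCS.translateBlock E z) z' = CCS.translateBlock E (z + z') := by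
  unfold CCS.translateBlock
  rw [Finset.image_image]
  congr 1
  funext e
  induction e using Sym2.ind with
  | _ a b => simp [add_assoc]

lemma translate_zero (E : CCS.Block v) : CCS.translateBlock E 0 = E := by
  unfold CCS.translateBlock
  have : Sym2.map (fun x : ZMod v => x + 0) = id := by
    funext e
    induction e using Sym2.ind with
    | _ a b => simp
  rw [this, Finset.image_id]

lemma mem_orbit_self (E : CCS.Block v) : E ∈ orbitOf E := ⟨0, translate_zero E⟩

lemma orbit_eq_of_mem {E E' : CCS.Block v} (h : E' ∈ orbitOf E) : orbitOf E' = orbitOf E := by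
  obtain ⟨z, hz⟩ := h
  subst hz
  ext F
  constructor
  · rintro ⟨w, hw⟩
    exact ⟨z + w, by rw [← translate_translate]; exact hw⟩
  · rintro ⟨w, hw⟩
    refine ⟨w - z, ?_⟩
    rw [translate_translate, show z + (w - z) = w by ring]
    exact hw

lemma psum_zero (e : Fin 5 → ZMod v) : psum e 0 = 0 := by
  simp [psum]

lemma psum_succ {e : Fin 5 → ZMod v} (hs : ∑ i, e i = 0) (j : Fin 5) :
    psum e (j + 1) = psum e j + e j := by
  rw [Fin.sum_univ_five] at hs
  have expand : ∀ j : Fin 5, psum e j =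
      ∑ i : Fin 5, if (i : ℕ) < (j : ℕ) then e i else 0 := by
    intro j
    rw [psum, Finset.sum_filter]
  fin_cases j
  · show psum e 1 = psum e 0 + e 0
    rw [expand, expand, Fin.sum_univ_five, Fin.sum_univ_five]
    simp (config := { decide := true })
    try ring
  · show psum e 2 = psum e 1 + e 1
    rw [expand, expand, Fin.sum_univ_five, Fin.sum_univ_five]
    simp (config := { decide := true })
    try ring
  · show psum e 3 = psum e 2 + e 2
    rw [expand, expand, Fin.sum_univ_five, Fin.sum_univ_five]
    simp (config := { decide := true })
    try ring
  · show psum e 4 = psum e 3 + e 3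
    rw [expand, expand, Fin.sum_univ_five, Fin.sum_univ_five]
    simp (config := { decide := true })
    try ring
  · show psum e 0 = psum e 4 + e 4
    rw [expand, expand, Fin.sum_univ_five, Fin.sum_univ_five]
    simp (config := { decide := true })
    linear_combination -hs

lemma chain5 {F G u : Fin 5 → ZMod v} (h0 : F 0 = G 0)
    (hF : ∀ i, F (i + 1) = F i + u i) (hG : ∀ i, G (i + 1) = G i + u i) :
    ∀ i, F i = G i := by
  have e1 : F 1 = G 1 := by
    rw [show (1 : Fin 5) = 0 + 1 by decide, hF, hG, h0]
  have e2 : F 2 = G 2 := by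
    rw [show (2 : Fin 5) = 1 + 1 by decide, hF, hG, e1]
  have e3 : F 3 = G 3 := by
    rw [show (3 : Fin 5) = 2 + 1 by decide, hF, hG, e2]
  have e4 : F 4 = G 4 := by
    rw [show (4 : Fin 5) = 3 + 1 by decide, hF, hG, e3]
  intro i
  fin_cases i <;> assumption

section DLemmas

variable (hdiff : Function.Injective fun p : Fin 5 × Bool => cond p.2 (d p.1) (-d p.1))
include hdiff

lemma dinj : Function.Injective d := by
  intro a b h
  have h' := hdiff (a₁ := (a, true)) (a₂ := (b, true)) (by simpa using h)
  simpa using h'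

lemma dne (a b : Fin 5) : d a ≠ -d b := by
  intro h
  have h' := hdiff (a₁ := (a, true)) (a₂ := (b, false)) (by simpa using h)
  simp at h'

lemma dnz (a : Fin 5) : d a ≠ 0 := by
  intro h
  exact dne hdiff a a (by rw [h]; simp)

lemma sum_ne_zero (hsum : ∑ i, d i = 0) :
    ∀ S : Finset (Fin 5), S.Nonempty → S ≠ Finset.univ → ∑ i ∈ S, d i ≠ 0 := by
  have small : ∀ S : Finset (Fin 5), S.Nonempty → S.card ≤ 2 → ∑ i ∈ S, d i ≠ 0 := by
    intro S hne hcard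
    obtain h1 | h2 : S.card = 1 ∨ S.card = 2 := by
      have := Finset.card_pos.mpr hne; omega
    · obtain ⟨i, rfl⟩ := Finset.card_eq_one.mp h1
      simpa using dnz hdiff i
    · obtain ⟨i, j, hij, rfl⟩ := Finset.card_eq_two.mp h2
      rw [Finset.sum_pair hij]
      intro h
      exact dne hdiff i j (eq_neg_of_add_eq_zero_left h)
  intro S hne hSu
  by_cases hc : S.card ≤ 2
  · exact small S hne hc
  · have hlt : S.card < 5 := by
      have := Finset.card_lt_card (Finset.ssubset_univ_iff.mpr hSu)
      simpa using this
    have hcc : Sᶜ.card = 5 - S.card := by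
      rw [Finset.card_compl]
      simp
    have hcompl : ∑ i ∈ Sᶜ, d i ≠ 0 := by
      apply small
      · rw [← Finset.card_pos]
        omega
      · omega
    have hadd := Finset.sum_add_sum_compl S d
    rw [hsum] at hadd
    intro h
    rw [h, zero_add] at hadd
    exact hcompl hadd

lemma psum_inj (hsum : ∑ i, d i = 0) (α : Equiv.Perm (Fin 5)) :
    Function.Injective (psum (d ∘ α)) := by
  have key : ∀ a b : Fin 5, a.1 < b.1 → psum (d ∘ α) a ≠ psum (d ∘ α) b := by
    intro a b hab h
    set S0 : Finset (Fin 5) := Finset.univ.filter (fun i => a.1 ≤ i.1 ∧ i.1 < b.1) with hS0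
    have hsplit : psum (d ∘ α) b = psum (d ∘ α) a + ∑ i ∈ S0, (d ∘ α) i := by
      unfold psum
      rw [← Finset.sum_filter_add_sum_filter_not
        (Finset.univ.filter fun i : Fin 5 => i.1 < b.1) (fun i => i.1 < a.1)]
      congr 1
      · apply Finset.sum_congr _ (fun _ _ => rfl)
        rw [Finset.filter_filter]
        ext i
        simp only [Finset.mem_filter, Finset.mem_univ, true_and]
        omega
      · apply Finset.sum_congr _ (fun _ _ => rfl)
        rw [Finset.filter_filter, hS0]
        ext i
        simp only [Finset.mem_filter, Finset.mem_univ, true_and]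
        omega
    rw [← h, left_eq_add] at hsplit
    have himg : ∑ i ∈ S0.image α, d i = 0 := by
      rw [Finset.sum_image (fun x _ y _ hxy => α.injective hxy)]
      exact hsplit
    refine sum_ne_zero hdiff hsum (S0.image α) ?_ ?_ himg
    · exact ⟨α a, Finset.mem_image_of_mem α (by simp [hS0]; omega)⟩
    · intro hu
      have : α b ∈ S0.image α := by rw [hu]; exact Finset.mem_univ _
      obtain ⟨i, hi, hib⟩ := Finset.mem_image.mp this
      have : i = b := α.injective hib
      subst this
      simp only [hS0, Finset.mem_filter, Finset.mem_univ, true_and] at hi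
      omega
  intro a b h
  rcases lt_trichotomy a.1 b.1 with hl | he | hg
  · exact absurd h (key a b hl)
  · exact Fin.ext he
  · exact absurd h.symm (key b a hg)

lemma core (hsum : ∑ i, d i = 0) (σ τ : Equiv.Perm (Fin 5)) (z : ZMod v)
    (h : CCS.translateBlock (CCS.edgesOf (psum (d ∘ τ))) z = CCS.edgesOf (psum (d ∘ σ))) :
    ∃ r : Fin 5, (∀ i, σ i = τ (i + r)) ∧
      ∀ i, psum (d ∘ σ) i = psum (d ∘ τ) (i + r) + z := by
  have hsσ : ∑ i, (d ∘ σ) i = 0 := by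
    simp only [Function.comp_apply]
    rw [Equiv.sum_comp σ d]; exact hsum
  have hsτ : ∑ i, (d ∘ τ) i = 0 := by
    simp only [Function.comp_apply]
    rw [Equiv.sum_comp τ d]; exact hsum
  have hp : ∀ j, psum (d ∘ σ) (j + 1) = psum (d ∘ σ) j + d (σ j) := psum_succ hsσ
  have hq0 : ∀ j, psum (d ∘ τ) (j + 1) = psum (d ∘ τ) j + d (τ j) := psum_succ hsτ
  rw [translate_edgesOf] at h
  have hq : ∀ j, psum (d ∘ τ) (j + 1) + z = (psum (d ∘ τ) j + z) + d (τ j) := by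
    intro j
    rw [hq0 j]
    ring
  have hqinj : Function.Injective (fun i : Fin 5 => psum (d ∘ τ) i + z) := by
    intro a b hab
    exact psum_inj hdiff hsum τ (by simpa using hab)
  have h1 : ∀ i, psum (d ∘ τ) (τ.symm (σ i)) + z = psum (d ∘ σ) i := by
    intro i
    have hm : s(psum (d ∘ σ) i, psum (d ∘ σ) (i + 1)) ∈
        CCS.edgesOf (fun i => psum (d ∘ τ) i + z) := by
      rw [h]
      exact mem_edgesOf.mpr ⟨i, rfl⟩
    obtain ⟨j, hj⟩ := mem_edgesOf.mp hm
    rw [hp i, hq j] at hj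
    rcases Sym2.eq_iff.mp hj with ⟨ha, hb⟩ | ⟨ha, hb⟩
    · rw [ha] at hb
      have hd : τ j = σ i := dinj hdiff (add_left_cancel hb)
      have hj' : j = τ.symm (σ i) := by rw [← hd]; simp
      rw [← hj']
      exact ha
    · rw [ha] at hb
      exact absurd (show d (σ i) = -d (τ j) by linear_combination hb) (dne hdiff _ _)
  have hτπ : ∀ i, τ (τ.symm (σ i)) = σ i := fun i => by simp
  have h3 : ∀ i, τ.symm (σ (i + 1)) = τ.symm (σ i) + 1 := by
    intro i
    apply hqinj
    show psum (d ∘ τ) (τ.symm (σ (i + 1))) + z = psum (d ∘ τ) (τ.symm (σ i) + 1) + z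
    rw [h1 (i + 1), hp i, ← h1 i, hq0 (τ.symm (σ i)), hτπ i]
    ring
  have c1 : τ.symm (σ 1) = τ.symm (σ 0) + 1 := by
    have := h3 0
    rwa [zero_add] at this
  have c2 : τ.symm (σ 2) = τ.symm (σ 0) + 1 + 1 := by
    rw [show (2 : Fin 5) = 1 + 1 by decide, h3 1, c1]
  have c3 : τ.symm (σ 3) = τ.symm (σ 0) + 1 + 1 + 1 := by
    rw [show (3 : Fin 5) = 2 + 1 by decide, h3 2, c2]
  have c4 : τ.symm (σ 4) = τ.symm (σ 0) + 1 + 1 + 1 + 1 := by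
    rw [show (4 : Fin 5) = 3 + 1 by decide, h3 3, c3]
  have k0 : τ.symm (σ 0) = 0 + τ.symm (σ 0) := (zero_add _).symm
  have k1 : τ.symm (σ 1) = 1 + τ.symm (σ 0) := c1.trans (add_comm _ _)
  have k2 : τ.symm (σ 2) = 2 + τ.symm (σ 0) := c2.trans (by open Fin.CommRing in ring)
  have k3 : τ.symm (σ 3) = 3 + τ.symm (σ 0) := c3.trans (by open Fin.CommRing in ring)
  have k4 : τ.symm (σ 4) = 4 + τ.symm (σ 0) := c4.trans (by open Fin.CommRing in ring)
  have h4 : ∀ i, τ.symm (σ i) = i + τ.symm (σ 0) := by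
    intro i
    fin_cases i <;> assumption
  refine ⟨τ.symm (σ 0), fun i => ?_, fun i => ?_⟩
  · rw [← h4 i, hτπ i]
  · rw [← h4 i, ← h1 i]

lemma bcore (hsum : ∑ i, d i = 0) (σ τ : Equiv.Perm (Fin 5)) (r : Fin 5)
    (h : ∀ i, σ i = τ (i + r)) :
    CCS.translateBlock (CCS.edgesOf (psum (d ∘ τ))) (-(psum (d ∘ τ) r)) =
      CCS.edgesOf (psum (d ∘ σ)) := by
  have hsσ : ∑ i, (d ∘ σ) i = 0 := by
    simp only [Function.comp_apply]
    rw [Equiv.sum_comp σ d]; exact hsum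
  have hsτ : ∑ i, (d ∘ τ) i = 0 := by
    simp only [Function.comp_apply]
    rw [Equiv.sum_comp τ d]; exact hsum
  have hp : ∀ j, psum (d ∘ σ) (j + 1) = psum (d ∘ σ) j + d (σ j) := psum_succ hsσ
  have hq0 : ∀ j, psum (d ∘ τ) (j + 1) = psum (d ∘ τ) j + d (τ j) := psum_succ hsτ
  have claim : ∀ i, psum (d ∘ σ) i = psum (d ∘ τ) (i + r) + -(psum (d ∘ τ) r) := by
    refine chain5 ?_ hp ?_
    · show psum (d ∘ σ) 0 = psum (d ∘ τ) (0 + r) + -(psum (d ∘ τ) r)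
      rw [psum_zero, zero_add]
      ring
    · intro i
      show psum (d ∘ τ) (i + 1 + r) + -(psum (d ∘ τ) r) =
        psum (d ∘ τ) (i + r) + -(psum (d ∘ τ) r) + d (σ i)
      rw [show i + 1 + r = (i + r) + 1 by open Fin.CommRing in ring, hq0 (i + r), h i]
      ring
  rw [translate_edgesOf, edgesOf_eq, edgesOf_eq]
  ext e
  simp only [Finset.mem_image, Finset.mem_univ, true_and]
  constructor
  · rintro ⟨i, rfl⟩
    refine ⟨i - r, ?_⟩
    rw [claim (i - r), claim (i - r + 1), show i - r + r = i by open Fin.CommRing in ring,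
      show i - r + 1 + r = i + 1 by open Fin.CommRing in ring]
  · rintro ⟨i, rfl⟩
    refine ⟨i + r, ?_⟩
    rw [claim i, claim (i + 1), show i + 1 + r = i + r + 1 by open Fin.CommRing in ring]

end DLemmas

end Stmt8Aux

open Stmt8Aux

/-- Let `C` be a 5-cycle of type 1 containing `0` with consecutive
difference sequence `(d_1, …, d_5)` (summing to `0`) whose ten elements `±d_i` are
pairwise distinct. For permutations `σ, τ` of the indices, the cycle `C_σ` lies in the
translation orbit of `C_τ` iff `(d_{σ(1)}, …, d_{σ(5)})` is a cyclic rotation of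
`(d_{τ(1)}, …, d_{τ(5)})`. Consequently the `5!` cycles `C_α` fall into exactly `4!`
translation-orbit classes of `5` cycles each. -/
theorem stmt8 (v : ℕ) (hv : 3 ≤ v) (hvodd : Odd v) (d : Fin 5 → ZMod v)
    (hsum : ∑ i, d i = 0)
    (hCinj : Function.Injective (psum d))
    (htype : CCS.cycleType (CCS.edgesOf (psum d)) = 1)
    (hdiff : Function.Injective fun p : Fin 5 × Bool => cond p.2 (d p.1) (-d p.1)) :
    (∀ σ τ : Equiv.Perm (Fin 5),
      CCS.edgesOf (psum (d ∘ σ)) ∈ orbitOf (CCS.edgesOf (psum (d ∘ τ))) ↔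
        ∃ r : Fin 5, ∀ i : Fin 5, d (σ i) = d (τ (i + r))) ∧
    Nat.card
      (Set.range fun α : Equiv.Perm (Fin 5) => orbitOf (CCS.edgesOf (psum (d ∘ α)))) =
      Nat.factorial 4 ∧
    (∀ α : Equiv.Perm (Fin 5),
      Nat.card {E : CCS.Block v //
        E ∈ Set.range (fun β : Equiv.Perm (Fin 5) => CCS.edgesOf (psum (d ∘ β))) ∧
        orbitOf E = orbitOf (CCS.edgesOf (psum (d ∘ α)))} = 5) := by
  classical
  set E : Equiv.Perm (Fin 5) → CCS.Block v := fun α => CCS.edgesOf (psum (d ∘ α)) with hEdef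
  have iff1 : ∀ σ τ : Equiv.Perm (Fin 5),
      E σ ∈ orbitOf (E τ) ↔ ∃ r : Fin 5, ∀ i : Fin 5, d (σ i) = d (τ (i + r)) := by
    intro σ τ
    constructor
    · rintro ⟨z, hz⟩
      obtain ⟨r, hr, -⟩ := core hdiff hsum σ τ z hz
      exact ⟨r, fun i => by rw [hr i]⟩
    · rintro ⟨r, hr⟩
      exact ⟨-(psum (d ∘ τ) r), bcore hdiff hsum σ τ r (fun i => dinj hdiff (hr i))⟩
  have orbit_iff : ∀ σ τ : Equiv.Perm (Fin 5),
      orbitOf (E σ) = orbitOf (E τ) ↔ ∃ r : Fin 5, ∀ i : Fin 5, σ i = τ (i + r) := by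
    intro σ τ
    constructor
    · intro h
      have hmem : E σ ∈ orbitOf (E τ) := by rw [← h]; exact mem_orbit_self _
      obtain ⟨z, hz⟩ := hmem
      obtain ⟨r, hr, -⟩ := core hdiff hsum σ τ z hz
      exact ⟨r, hr⟩
    · rintro ⟨r, hr⟩
      exact orbit_eq_of_mem ⟨-(psum (d ∘ τ) r), bcore hdiff hsum σ τ r hr⟩
  have Einj : Function.Injective E := by
    intro σ τ h
    have hz : CCS.translateBlock (E τ) 0 = E σ := by rw [translate_zero, h]
    obtain ⟨r, hr, hr2⟩ := core hdiff hsum σ τ 0 hz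
    have h0 : psum (d ∘ σ) 0 = psum (d ∘ τ) (0 + r) + 0 := hr2 0
    rw [zero_add, add_zero, psum_zero] at h0
    have hr0 : r = 0 := psum_inj hdiff hsum τ
      (show psum (d ∘ τ) r = psum (d ∘ τ) 0 by rw [psum_zero, ← h0])
    exact Equiv.ext fun i => by rw [hr i, hr0, add_zero]
  have part3 : ∀ α : Equiv.Perm (Fin 5),
      Nat.card {Ex : CCS.Block v // Ex ∈ Set.range E ∧ orbitOf Ex = orbitOf (E α)} = 5 := by
    intro α
    have hbij : Function.Bijective (fun r : Fin 5 =>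
        (⟨E (α * Equiv.addRight r), ⟨α * Equiv.addRight r, rfl⟩,
          (orbit_iff _ _).mpr ⟨r, fun i => rfl⟩⟩ :
          {Ex : CCS.Block v // Ex ∈ Set.range E ∧ orbitOf Ex = orbitOf (E α)})) := by
      constructor
      · intro r r' h
        have h' := Einj (congrArg Subtype.val h)
        have h0 := congrArg (fun g : Equiv.Perm (Fin 5) => g 0) h'
        simpa using h0
      · rintro ⟨Ex, ⟨β, hβ⟩, horb⟩
        rw [← hβ] at horb
        obtain ⟨r, hr⟩ := (orbit_iff β α).mp horb
        refine ⟨r, Subtype.ext ?_⟩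
        have hβeq : β = α * Equiv.addRight r := Equiv.ext hr
        simp only
        rw [← hβeq, hβ]
    rw [← Nat.card_eq_of_bijective _ hbij, Nat.card_eq_fintype_card, Fintype.card_fin]
  refine ⟨iff1, ?_, part3⟩
  set f : Equiv.Perm (Fin 5) → Set (CCS.Block v) := fun α => orbitOf (E α) with hfdef
  have hrange : Set.range f = ↑(Finset.univ.image f) := by
    rw [Finset.coe_image, Finset.coe_univ, Set.image_univ]
  rw [hrange, Nat.card_coe_set_eq, Set.ncard_coe_finset]
  have hfiber : ∀ b ∈ Finset.univ.image f,
      (Finset.univ.filter fun β => f β = b).card = 5 := by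
    intro b hb
    obtain ⟨α, -, rfl⟩ := Finset.mem_image.mp hb
    have hset : (Finset.univ.filter fun β => f β = f α) =
        Finset.univ.image (fun r : Fin 5 => α * Equiv.addRight r) := by
      ext β
      simp only [Finset.mem_filter, Finset.mem_univ, true_and, Finset.mem_image]
      constructor
      · intro hfb
        obtain ⟨r, hr⟩ := (orbit_iff β α).mp hfb
        exact ⟨r, (Equiv.ext hr).symm⟩
      · rintro ⟨r, rfl⟩
        exact (orbit_iff _ _).mpr ⟨r, fun i => rfl⟩
    rw [hset, Finset.card_image_of_injective _ ?_, Finset.card_univ, Fintype.card_fin]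
    intro r r' h
    have h0 := congrArg (fun g : Equiv.Perm (Fin 5) => g 0) h
    simpa using h0
  have hcount := Finset.card_eq_sum_card_image f (Finset.univ : Finset (Equiv.Perm (Fin 5)))
  rw [Finset.sum_congr rfl hfiber, Finset.sum_const, smul_eq_mul, Finset.card_univ,
    Fintype.card_perm, Fintype.card_fin] at hcount
  have h120 : Nat.factorial 5 = 120 := rfl
  have hc24 : (Finset.univ.image f).card = 24 := by omega
  rw [hc24]
  rfl
end
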